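/- Let μ be the uniform (Lebesgue) probability measure on S^1 and ν any probability measure on S^1. For the quadratic cost h(x)=|x|², the unique minimizer of α ↦ ∫₀¹ |F_μ^{-1}(x) − F_ν^{-1}(x−α)|² dx is α_{μ,ν} = 𝔼(ν) − 1/2, where 𝔼(ν) = ∫₀¹ x dν(x). -/

import Mathlib

set_option maxHeartbeats 1000000
set_option linter.unusedSectionVars false


open MeasureTheory Set

noncomputable section

/-- Geodesic distance on the circle `ℝ/ℤ`, for representatives `x, y ∈ ℝ`:
`|x - y|_{S¹} = min_{k ∈ ℤ} |x - y + k|`. -/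
def circleDist (x y : ℝ) : ℝ := ⨅ k : ℤ, |x - y + (k : ℝ)|

/-- The CDF of a circular probability measure (represented as a probability measure on `ℝ`
supported on `[0,1)`), extended to all of `ℝ` by `F(y + n) = F(y) + n`. -/
def cdf (μ : Measure ℝ) (y : ℝ) : ℝ := (μ (Ico 0 (Int.fract y))).toReal + (⌊y⌋ : ℝ)

/-- The quantile function `F_μ⁻¹(y) := inf {x | F_μ(x) > y}`. -/
def quantile (μ : Measure ℝ) (y : ℝ) : ℝ := sInf {x : ℝ | cdf μ x > y}

/-- The CDF with respect to a reference (cutting) point `x₀`: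
`F_{μ,x₀}(y) := F_μ(x₀ + y) - F_μ(x₀)`. -/
def cdfCut (μ : Measure ℝ) (x₀ y : ℝ) : ℝ := cdf μ (x₀ + y) - cdf μ x₀

/-- The quantile of the cut CDF: `F_{μ,x₀}⁻¹(y) := inf {x | F_{μ,x₀}(x) > y}`. -/
def quantileCut (μ : Measure ℝ) (x₀ y : ℝ) : ℝ := sInf {x : ℝ | cdfCut μ x₀ x > y}

/-- The circular optimal transport cost `COT_h(μ,ν)` with ground cost `h (|x - y|_{S¹})`,
the infimum over all couplings of `μ` and `ν`. -/
def COT (h : ℝ → ℝ) (μ ν : Measure ℝ) : ℝ :=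
  sInf {c : ℝ | ∃ γ : Measure (ℝ × ℝ), IsProbabilityMeasure γ ∧
    γ.map Prod.fst = μ ∧ γ.map Prod.snd = ν ∧
    c = ∫ p, h (circleDist p.1 p.2) ∂γ}

/-- The transport cost associated with cutting the circle at `x₀`:
`∫₀¹ h(|F_{μ,x₀}⁻¹(x) - F_{ν,x₀}⁻¹(x)|) dx`. -/
def cutCost (h : ℝ → ℝ) (μ ν : Measure ℝ) (x₀ : ℝ) : ℝ :=
  ∫ x in (0:ℝ)..1, h |quantileCut μ x₀ x - quantileCut ν x₀ x|

/-- The transport cost associated with a shift `α`: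
`∫₀¹ h(|F_μ⁻¹(x) - F_ν⁻¹(x - α)|) dx`. -/
def shiftCost (h : ℝ → ℝ) (μ ν : Measure ℝ) (α : ℝ) : ℝ :=
  ∫ x in (0:ℝ)..1, h |quantile μ x - quantile ν (x - α)|

/-- The circular Monge map determined by a cutting point `x_cut`:
`M_μ^ν(x) := F_{ν,x_cut}⁻¹(F_{μ,x_cut}(x - x_cut)) + x_cut`. -/
def mongeMap (μ ν : Measure ℝ) (xcut : ℝ) (x : ℝ) : ℝ :=
  quantileCut ν xcut (cdfCut μ xcut (x - xcut)) + xcut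

/-- The LCOT embedding of `ν` with respect to the reference `μ` and shift `α`:
`ν̂(x) := F_ν⁻¹(F_μ(x) - α) - x`. -/
def lcotEmbed (μ ν : Measure ℝ) (α : ℝ) (x : ℝ) : ℝ :=
  quantile ν (cdf μ x - α) - x

namespace CQaux

variable {ν : Measure ℝ} [IsProbabilityMeasure ν]

lemma toReal_le_one (s : Set ℝ) : (ν s).toReal ≤ 1 := by
  have h : ν s ≤ 1 := prob_le_one
  simpa using ENNReal.toReal_mono ENNReal.one_ne_top h

lemma cdf_le (y : ℝ) : cdf ν y ≤ (⌊y⌋ : ℝ) + 1 := by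
  unfold cdf; linarith [toReal_le_one (ν := ν) (Ico 0 (Int.fract y))]

lemma le_cdf (y : ℝ) : (⌊y⌋ : ℝ) ≤ cdf ν y := by
  unfold cdf; simp [ENNReal.toReal_nonneg]

lemma cdf_mono : Monotone (cdf ν) := by
  intro a b hab
  rcases lt_or_eq_of_le (Int.floor_le_floor hab) with h | h
  · calc cdf ν a ≤ (⌊a⌋ : ℝ) + 1 := cdf_le a
      _ ≤ (⌊b⌋ : ℝ) := by exact_mod_cast h
      _ ≤ cdf ν b := le_cdf b
  · unfold cdf
    have hf : Int.fract a ≤ Int.fract b := by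
      unfold Int.fract; rw [h]; linarith
    have : ν (Ico 0 (Int.fract a)) ≤ ν (Ico 0 (Int.fract b)) :=
      measure_mono (Ico_subset_Ico le_rfl hf)
    rw [h]
    have := ENNReal.toReal_mono (measure_ne_top ν _) this
    linarith

lemma cdf_add_one (y : ℝ) : cdf ν (y + 1) = cdf ν y + 1 := by
  unfold cdf
  rw [Int.fract_add_one, Int.floor_add_one]
  push_cast; ring

lemma cdf_intCast (n : ℤ) : cdf ν (n : ℝ) = n := by
  unfold cdf
  simp [Int.fract_intCast, Int.floor_intCast]

lemma quantile_set_nonempty (t : ℝ) : {x : ℝ | cdf ν x > t}.Nonempty := by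
  refine ⟨t + 2, ?_⟩
  have h1 : (t + 2 : ℝ) - 1 < (⌊(t + 2 : ℝ)⌋ : ℝ) := by
    have := Int.lt_floor_add_one (t + 2 : ℝ); have := Int.floor_le (t + 2 : ℝ); linarith [Int.sub_one_lt_floor (t+2:ℝ)]
  have := le_cdf (ν := ν) (t + 2)
  simp only [mem_setOf_eq]
  linarith

lemma quantile_set_bddBelow (t : ℝ) : BddBelow {x : ℝ | cdf ν x > t} := by
  refine ⟨t - 1, fun x hx => ?_⟩
  simp only [mem_setOf_eq] at hx
  have h1 := cdf_le (ν := ν) x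
  have h2 : (⌊x⌋ : ℝ) ≤ x := Int.floor_le x
  linarith

lemma quantile_mono : Monotone (quantile ν) := by
  intro s t hst
  exact csInf_le_csInf (quantile_set_bddBelow s) (quantile_set_nonempty t)
    (fun x hx => lt_of_le_of_lt hst hx)

end CQaux

namespace CQaux

variable {ν : Measure ℝ} [IsProbabilityMeasure ν]

lemma exists_lt_measIco {r t : ℝ} (hr : 0 < r) (ht : t < (ν (Ico 0 r)).toReal) :
    ∃ s, 0 ≤ s ∧ s < r ∧ t < (ν (Ico 0 s)).toReal := by
  rcases lt_or_ge t 0 with ht0 | ht0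
  · exact ⟨r / 2, by positivity, by linarith, lt_of_lt_of_le ht0 ENNReal.toReal_nonneg⟩
  · set A : ℕ → Set ℝ := fun k => Ico 0 (r - r / (k + 2)) with hA
    have hmono : Monotone A := by
      intro i j hij
      apply Ico_subset_Ico le_rfl
      have h2 : (0:ℝ) < (i:ℝ) + 2 := by positivity
      have h2' : (i:ℝ) + 2 ≤ (j:ℝ) + 2 := by
        have : (i:ℝ) ≤ (j:ℝ) := Nat.cast_le.2 hij
        linarith
      have := div_le_div_of_nonneg_left hr.le h2 h2'
      linarith
    have hunion : ⋃ k, A k = Ico 0 r := by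
      ext y
      simp only [hA, mem_iUnion, mem_Ico]
      constructor
      · rintro ⟨k, h0, h1⟩
        have : 0 < r / ((k:ℝ) + 2) := by positivity
        exact ⟨h0, by linarith⟩
      · rintro ⟨h0, h1⟩
        obtain ⟨n, hn⟩ := exists_nat_gt (r / (r - y))
        refine ⟨n, h0, ?_⟩
        have hry : (0:ℝ) < r - y := by linarith
        have hn2 : r / ((n:ℝ) + 2) < r - y := by
          have hrn : r < (r - y) * n := by
            have := (div_lt_iff₀ hry).1 hn
            linarith
          rw [div_lt_iff₀ (by positivity)]
          nlinarith
        linarith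
    have hsup : ν (Ico 0 r) = ⨆ k, ν (A k) := by
      rw [← hunion, hmono.directed_le.measure_iUnion]
    have h1 : ENNReal.ofReal t < ν (Ico 0 r) :=
      (ENNReal.ofReal_lt_iff_lt_toReal ht0 (measure_ne_top _ _)).2 ht
    rw [hsup, lt_iSup_iff] at h1
    obtain ⟨k, hk⟩ := h1
    refine ⟨r - r / (k + 2), ?_, ?_, ?_⟩
    · have h2 : (0:ℝ) < (k:ℝ) + 2 := by positivity
      have : r / ((k:ℝ) + 2) ≤ r := by
        rw [div_le_iff₀ h2]; nlinarith
      linarith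
    · have : 0 < r / ((k:ℝ) + 2) := by positivity
      linarith
    · exact (ENNReal.ofReal_lt_iff_lt_toReal ht0 (measure_ne_top _ _)).1 hk

lemma helper_lt_cdf (m : ℤ) (r t : ℝ) (hr0 : 0 < r) (hr1 : r ≤ 1)
    (ht : t < (ν (Ico 0 r)).toReal + m) : ∃ y < (m : ℝ) + r, t < cdf ν y := by
  obtain ⟨s, hs0, hsr, hts⟩ := exists_lt_measIco (ν := ν) hr0 (show t - (m:ℝ) < (ν (Ico 0 r)).toReal by linarith)
  refine ⟨(m : ℝ) + s, by linarith, ?_⟩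
  have hcdf : cdf ν ((m : ℝ) + s) = (ν (Ico 0 s)).toReal + m := by
    unfold cdf
    rw [Int.fract_intCast_add, Int.floor_intCast_add,
      Int.fract_eq_self.2 ⟨hs0, lt_of_lt_of_le hsr hr1⟩,
      Int.floor_eq_zero_iff.2 ⟨hs0, lt_of_lt_of_le hsr hr1⟩]
    push_cast; ring
  rw [hcdf]; linarith

lemma lt_cdf_exists (hν : ν (Ico 0 1) = 1) {t x : ℝ} (h : t < cdf ν x) :
    ∃ y < x, t < cdf ν y := by
  rcases eq_or_lt_of_le (Int.fract_nonneg x) with h0 | h0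
  · have hx : ((⌊x⌋ : ℤ) : ℝ) = x := by
      have := Int.floor_add_fract x; rw [← h0] at this; simpa using this
    have hcdf : cdf ν x = (⌊x⌋ : ℝ) := by
      unfold cdf; rw [← h0]; simp
    rw [hcdf] at h
    obtain ⟨y, hy, hty⟩ := helper_lt_cdf (ν := ν) (⌊x⌋ - 1) 1 t one_pos le_rfl
      (by rw [hν, ENNReal.toReal_one]; push_cast; linarith)
    refine ⟨y, ?_, hty⟩
    push_cast at hy; linarith [hx]
  · obtain ⟨y, hy, hty⟩ := helper_lt_cdf (ν := ν) ⌊x⌋ (Int.fract x) t h0 (Int.fract_lt_one x).le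
      (by unfold cdf at h; exact h)
    refine ⟨y, ?_, hty⟩
    have := Int.floor_add_fract x
    linarith

lemma quantile_lt_iff (hν : ν (Ico 0 1) = 1) {t x : ℝ} :
    quantile ν t < x ↔ t < cdf ν x := by
  constructor
  · intro h
    obtain ⟨y, hy, hyx⟩ := exists_lt_of_csInf_lt (quantile_set_nonempty (ν := ν) t) h
    exact lt_of_lt_of_le hy (cdf_mono hyx.le)
  · intro h
    obtain ⟨y, hyx, hty⟩ := lt_cdf_exists hν h
    exact lt_of_le_of_lt (csInf_le (quantile_set_bddBelow t) hty) hyx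

end CQaux

namespace CQaux

variable {ν : Measure ℝ} [IsProbabilityMeasure ν]

lemma quantile_le_one {t : ℝ} (ht : t < 1) : quantile ν t ≤ 1 := by
  apply csInf_le (quantile_set_bddBelow t)
  show cdf ν 1 > t
  have : cdf ν ((1 : ℤ) : ℝ) = ((1 : ℤ) : ℝ) := cdf_intCast 1
  push_cast at this
  rw [this]; exact ht

lemma quantile_nonneg (hν : ν (Ico 0 1) = 1) {t : ℝ} (ht : 0 ≤ t) :
    0 ≤ quantile ν t := by
  by_contra h
  push_neg at h
  have := (quantile_lt_iff hν).1 h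
  have h0 : cdf ν ((0 : ℤ) : ℝ) = ((0 : ℤ) : ℝ) := cdf_intCast 0
  push_cast at h0
  rw [h0] at this
  linarith

lemma quantile_add_one (hν : ν (Ico 0 1) = 1) (t : ℝ) :
    quantile ν (t + 1) = quantile ν t + 1 := by
  apply eq_of_forall_gt_iff
  intro c
  rw [quantile_lt_iff hν]
  have hc : cdf ν c = cdf ν (c - 1) + 1 := by
    have := cdf_add_one (ν := ν) (c - 1); rw [sub_add_cancel] at this; exact this
  constructor
  · intro h
    have h2 : t < cdf ν (c - 1) := by linarith
    have := (quantile_lt_iff hν).2 h2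
    linarith
  · intro h
    have h2 : quantile ν t < c - 1 := by linarith
    have := (quantile_lt_iff hν).1 h2
    linarith

lemma quantile_preimage_Iic (hν : ν (Ico 0 1) = 1) (x : ℝ) :
    quantile ν ⁻¹' (Iic x) = ⋂ n : ℕ, Iio (cdf ν (x + 1 / (n + 1))) := by
  ext t
  simp only [mem_preimage, mem_Iic, mem_iInter, mem_Iio]
  constructor
  · intro h n
    rw [← quantile_lt_iff hν]
    have : (0:ℝ) < 1 / ((n:ℝ) + 1) := by positivity
    linarith
  · intro h
    by_contra hlt
    push_neg at hlt
    obtain ⟨n, hn⟩ := exists_nat_one_div_lt (show (0:ℝ) < quantile ν t - x by linarith)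
    have := (quantile_lt_iff hν).2 (h n)
    linarith

lemma ofReal_min_cdf (hν : ν (Ico 0 1) = 1) (y : ℝ) :
    ENNReal.ofReal (min (cdf ν y) 1) = ν (Ico 0 y) := by
  rcases lt_or_ge y 0 with hy | hy
  · have hfl : ⌊y⌋ < 0 := Int.floor_lt.2 (by exact_mod_cast hy)
    have h1 : cdf ν y ≤ 0 := by
      have := cdf_le (ν := ν) y
      have : ((⌊y⌋ : ℝ) + 1) ≤ 0 := by exact_mod_cast Int.add_one_le_of_lt hfl
      linarith [cdf_le (ν := ν) y]
    have h2 : ENNReal.ofReal (min (cdf ν y) 1) = 0 :=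
      ENNReal.ofReal_eq_zero.2 (le_trans (min_le_left _ _) h1)
    rw [h2, Ico_eq_empty (by linarith : ¬ (0:ℝ) < y), measure_empty]
  · rcases lt_or_ge y 1 with hy1 | hy1
    · have hfr : Int.fract y = y := Int.fract_eq_self.2 ⟨hy, hy1⟩
      have hfl : ⌊y⌋ = 0 := Int.floor_eq_zero_iff.2 ⟨hy, hy1⟩
      have hcdf : cdf ν y = (ν (Ico 0 y)).toReal := by
        unfold cdf; rw [hfr, hfl]; simp
      rw [hcdf, min_eq_left (toReal_le_one _), ENNReal.ofReal_toReal (measure_ne_top _ _)]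
    · have h1 : (1:ℝ) ≤ cdf ν y := by
        have := cdf_mono (ν := ν) (show ((1:ℤ):ℝ) ≤ y by push_cast; linarith)
        rw [cdf_intCast] at this; push_cast at this; linarith
      rw [min_eq_right h1]
      have : ν (Ico 0 y) = 1 := le_antisymm prob_le_one
        (by rw [← hν]; exact measure_mono (Ico_subset_Ico le_rfl hy1))
      rw [this]; simp

lemma restrict_Iio (c : ℝ) :
    (volume.restrict (Ico 0 1)) (Iio c) = ENNReal.ofReal (min c 1) := by
  rw [Measure.restrict_apply measurableSet_Iio]
  have : Iio c ∩ Ico 0 1 = Ico 0 (min c 1) := by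
    ext t
    simp only [mem_inter_iff, mem_Iio, mem_Ico, lt_min_iff]
    tauto
  rw [this, Real.volume_Ico]
  norm_num

lemma map_quantile (hν : ν (Ico 0 1) = 1) :
    (volume.restrict (Ico 0 1)).map (quantile ν) = ν := by
  have hQm : Measurable (quantile ν) := (quantile_mono (ν := ν)).measurable
  have hIio0 : ν (Iio 0) = 0 := by
    have hcompl : ν (Ico 0 1)ᶜ = 0 := by
      rw [prob_compl_eq_zero_iff measurableSet_Ico]; exact hν
    exact measure_mono_null (fun t ht => by simp only [mem_compl_iff, mem_Ico]; intro ⟨h1, _⟩; exact absurd ht (not_lt.2 h1)) hcompl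
  refine Measure.ext_of_Iic _ _ (fun x => ?_)
  rw [Measure.map_apply hQm measurableSet_Iic, quantile_preimage_Iic hν]
  rcases lt_or_ge x 0 with hx | hx
  · -- both sides are zero
    obtain ⟨n, hn⟩ := exists_nat_one_div_lt (show (0:ℝ) < -x by linarith)
    have hneg : x + 1 / ((n:ℝ) + 1) < 0 := by linarith
    have hcle : cdf ν (x + 1 / ((n:ℝ) + 1)) ≤ 0 := by
      have hfl : ⌊x + 1 / ((n:ℝ) + 1)⌋ < 0 := Int.floor_lt.2 (by exact_mod_cast hneg)
      have h2 : ((⌊x + 1 / ((n:ℝ) + 1)⌋ : ℝ) + 1) ≤ 0 := by exact_mod_cast Int.add_one_le_of_lt hfl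
      linarith [cdf_le (ν := ν) (x + 1 / ((n:ℝ) + 1))]
    have hle : (volume.restrict (Ico 0 1)) (⋂ n : ℕ, Iio (cdf ν (x + 1 / (n + 1)))) ≤ 0 := by
      calc (volume.restrict (Ico 0 1)) (⋂ n : ℕ, Iio (cdf ν (x + 1 / (n + 1))))
          ≤ (volume.restrict (Ico 0 1)) (Iio (cdf ν (x + 1 / ((n:ℝ) + 1)))) :=
            measure_mono (iInter_subset _ n)
        _ = ENNReal.ofReal (min (cdf ν (x + 1 / ((n:ℝ) + 1))) 1) := restrict_Iio _
        _ = 0 := by rw [ENNReal.ofReal_eq_zero]; simp only [min_le_iff]; left; exact hcle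
    have hν0 : ν (Iic x) = 0 :=
      measure_mono_null (fun t ht => lt_of_le_of_lt ht hx) hIio0
    rw [hν0]; exact le_antisymm hle zero_le
  · -- x ≥ 0
    have hanti : Antitone (fun n : ℕ => Iio (cdf ν (x + 1 / ((n:ℝ) + 1)))) := by
      intro i j hij
      apply Iio_subset_Iio
      apply cdf_mono
      have h1 : ((i:ℝ) + 1) ≤ ((j:ℝ) + 1) := by
        have : (i:ℝ) ≤ (j:ℝ) := Nat.cast_le.2 hij
        linarith
      have := one_div_le_one_div_of_le (by positivity : (0:ℝ) < (i:ℝ) + 1) h1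
      linarith
    rw [Directed.measure_iInter (fun n => measurableSet_Iio.nullMeasurableSet)
      hanti.directed_ge ⟨0, measure_ne_top _ _⟩]
    have hterm : ∀ n : ℕ, (volume.restrict (Ico 0 1)) (Iio (cdf ν (x + 1 / ((n:ℝ) + 1))))
        = ν (Ico 0 (x + 1 / ((n:ℝ) + 1))) := by
      intro n
      rw [restrict_Iio, ofReal_min_cdf hν]
    simp_rw [hterm]
    have hanti2 : Antitone (fun n : ℕ => Ico (0:ℝ) (x + 1 / ((n:ℝ) + 1))) := by
      intro i j hij
      apply Ico_subset_Ico le_rfl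
      have h1 : ((i:ℝ) + 1) ≤ ((j:ℝ) + 1) := by
        have : (i:ℝ) ≤ (j:ℝ) := Nat.cast_le.2 hij
        linarith
      have := one_div_le_one_div_of_le (by positivity : (0:ℝ) < (i:ℝ) + 1) h1
      linarith
    rw [← Directed.measure_iInter (fun n => measurableSet_Ico.nullMeasurableSet)
      hanti2.directed_ge ⟨0, measure_ne_top _ _⟩]
    have hInter : (⋂ n : ℕ, Ico (0:ℝ) (x + 1 / ((n:ℝ) + 1))) = Icc 0 x := by
      ext t
      simp only [mem_iInter, mem_Ico, mem_Icc]
      constructor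
      · intro h
        refine ⟨(h 0).1, ?_⟩
        by_contra hlt
        push_neg at hlt
        obtain ⟨n, hn⟩ := exists_nat_one_div_lt (show (0:ℝ) < t - x by linarith)
        have := (h n).2
        linarith
      · intro ⟨h0, h1⟩ n
        have : (0:ℝ) < 1 / ((n:ℝ) + 1) := by positivity
        exact ⟨h0, by linarith⟩
    rw [hInter]
    have hset : Iic x = Icc 0 x ∪ Iio 0 := by
      ext t
      simp only [mem_Iic, mem_union, mem_Icc, mem_Iio]
      constructor
      · intro h
        rcases lt_or_ge t 0 with h' | h'
        · right; exact h'
        · left; exact ⟨h', h⟩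
      · rintro (⟨_, h⟩ | h)
        · exact h
        · linarith
    rw [hset]
    refine le_antisymm (measure_mono subset_union_left) (le_trans (measure_union_le _ _) ?_)
    rw [hIio0, add_zero]

end CQaux

namespace CQaux

variable {ν : Measure ℝ} [IsProbabilityMeasure ν]

lemma integral_quantile (hν : ν (Ico 0 1) = 1) :
    ∫ t in Ico (0:ℝ) 1, quantile ν t = ∫ x in Ico (0:ℝ) 1, x ∂ν := by
  have hQm : Measurable (quantile ν) := (quantile_mono (ν := ν)).measurable
  have hrestr : ν.restrict (Ico 0 1) = ν := by
    apply Measure.restrict_eq_self_of_ae_mem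
    have hcompl : ν (Ico 0 1)ᶜ = 0 := by
      rw [prob_compl_eq_zero_iff measurableSet_Ico]; exact hν
    exact mem_ae_iff.2 hcompl
  calc ∫ t in Ico (0:ℝ) 1, quantile ν t
      = ∫ x, x ∂((volume.restrict (Ico 0 1)).map (quantile ν)) :=
        (integral_map hQm.aemeasurable aestronglyMeasurable_id).symm
    _ = ∫ x, x ∂ν := by rw [map_quantile hν]
    _ = ∫ x in Ico (0:ℝ) 1, x ∂ν := by rw [hrestr]

end CQaux


/-- For the uniform reference `μ` and quadratic cost, the unique minimizer of
`α ↦ ∫₀¹ |F_μ⁻¹(x) - F_ν⁻¹(x - α)|² dx` is `α_{μ,ν} = 𝔼(ν) - 1/2`. -/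
theorem quadratic_shift_minimizer_uniform
    (ν : Measure ℝ) [IsProbabilityMeasure ν] (hν : ν (Ico 0 1) = 1) :
    letI unif : Measure ℝ := volume.restrict (Ico 0 1)
    letI f : ℝ → ℝ := fun α =>
      ∫ x in (0:ℝ)..1, |quantile unif x - quantile ν (x - α)| ^ 2
    letI Eν : ℝ := ∫ x in Ico (0:ℝ) 1, x ∂ν
    (∀ α : ℝ, f (Eν - 1/2) ≤ f α) ∧
    (∀ α : ℝ, (∀ β : ℝ, f α ≤ f β) → α = Eν - 1/2) := by
  set F : ℝ → ℝ := fun α =>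
    ∫ x in (0:ℝ)..1, |quantile (volume.restrict (Ico 0 1)) x - quantile ν (x - α)| ^ 2 with hF
  set E : ℝ := ∫ x in Ico (0:ℝ) 1, x ∂ν with hE
  show (∀ α : ℝ, F (E - 1/2) ≤ F α) ∧ (∀ α : ℝ, (∀ β : ℝ, F α ≤ F β) → α = E - 1/2)
  -- quantile of the uniform measure is the identity
  have huq : ∀ x : ℝ, quantile (volume.restrict (Ico 0 1)) x = x := by
    intro x
    have hcdf : ∀ y : ℝ, cdf (volume.restrict (Ico 0 1)) y = y := by
      intro y
      unfold cdf
      rw [Measure.restrict_apply measurableSet_Ico]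
      have h1 : Ico 0 (Int.fract y) ∩ Ico 0 1 = Ico 0 (Int.fract y) :=
        inter_eq_self_of_subset_left (Ico_subset_Ico le_rfl (Int.fract_lt_one y).le)
      rw [h1, Real.volume_Ico, sub_zero, ENNReal.toReal_ofReal (Int.fract_nonneg y),
        Int.fract_add_floor]
    have hset : {y : ℝ | cdf (volume.restrict (Ico 0 1)) y > x} = Ioi x := by
      ext y; simp [hcdf y, Ioi]
    unfold quantile
    rw [hset, csInf_Ioi]
  -- the periodic displacement g
  set Q : ℝ → ℝ := quantile ν with hQdef
  set g : ℝ → ℝ := fun t => Q t - t with hgdef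
  have hQm : Measurable Q := (CQaux.quantile_mono (ν := ν)).measurable
  have hgm : Measurable g := hQm.sub measurable_id
  have hper : Function.Periodic g 1 := by
    intro t
    simp only [hgdef, hQdef]
    rw [CQaux.quantile_add_one hν]
    ring
  have hgbd : ∀ t, |g t| ≤ 1 := by
    intro t
    have h1 : g t = g (Int.fract t) := by
      have := hper.sub_int_mul_eq (x := t) ⌊t⌋
      rw [mul_one] at this
      exact this.symm
    rw [h1]
    have hf0 : (0:ℝ) ≤ Int.fract t := Int.fract_nonneg t
    have hf1 : Int.fract t < 1 := Int.fract_lt_one t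
    have hq0 : 0 ≤ Q (Int.fract t) := CQaux.quantile_nonneg hν hf0
    have hq1 : Q (Int.fract t) ≤ 1 := CQaux.quantile_le_one hf1
    have h2 : g (Int.fract t) = Q (Int.fract t) - Int.fract t := rfl
    rw [abs_le, h2]
    constructor <;> nlinarith
  -- interval integrability of bounded measurable functions
  have hbint : ∀ (h : ℝ → ℝ), Measurable h → (∀ t, |h t| ≤ 1) →
      ∀ a b : ℝ, IntervalIntegrable h volume a b := by
    intro h hm hbd a b
    rw [intervalIntegrable_iff]
    have hfin : volume (Set.uIoc a b) ≠ ⊤ := by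
      rw [Set.uIoc]; exact measure_Ioc_lt_top.ne
    apply Measure.integrableOn_of_bounded (M := 1) hfin hm.aestronglyMeasurable
    exact Filter.Eventually.of_forall (fun t => by simpa using hbd t)
  have hg_int : IntervalIntegrable g volume 0 1 := hbint g hgm hgbd 0 1
  have hg2_int : IntervalIntegrable (fun u => g u ^ 2) volume 0 1 := by
    rw [intervalIntegrable_iff]
    have hfin : volume (Set.uIoc (0:ℝ) 1) ≠ ⊤ := by
      rw [Set.uIoc]; exact measure_Ioc_lt_top.ne
    apply Measure.integrableOn_of_bounded (M := 1) hfin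
      ((hgm.pow_const 2).aestronglyMeasurable)
    refine Filter.Eventually.of_forall (fun t => ?_)
    have := hgbd t
    rw [Real.norm_eq_abs, abs_pow]
    nlinarith [abs_nonneg (g t)]
  -- the quadratic expansion of F
  set A : ℝ := ∫ u in (0:ℝ)..1, g u with hA
  set B : ℝ := ∫ u in (0:ℝ)..1, g u ^ 2 with hB
  have hFα : ∀ α : ℝ, F α = α ^ 2 - 2 * α * A + B := by
    intro α
    have step1 : F α = ∫ x in (0:ℝ)..1, (α - g (x - α)) ^ 2 := by
      rw [hF]
      apply intervalIntegral.integral_congr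
      intro x _
      show |quantile (volume.restrict (Ico 0 1)) x - Q (x - α)| ^ 2 = (α - g (x - α)) ^ 2
      rw [huq x, sq_abs]
      have h2 : x - Q (x - α) = α - g (x - α) := by
        show x - Q (x - α) = α - (Q (x - α) - (x - α)); ring
      rw [h2]
    have step2 : (∫ x in (0:ℝ)..1, (α - g (x - α)) ^ 2)
        = ∫ u in (0:ℝ)-α..(1:ℝ)-α, (α - g u) ^ 2 := by
      exact intervalIntegral.integral_comp_sub_right (fun u => (α - g u) ^ 2) α
    have hperq : Function.Periodic (fun u => (α - g u) ^ 2) 1 := by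
      intro t; simp [hper t]
    have step3 : (∫ u in (0:ℝ)-α..(1:ℝ)-α, (α - g u) ^ 2)
        = ∫ u in (0:ℝ)..1, (α - g u) ^ 2 := by
      have h := hperq.intervalIntegral_add_eq (-α) 0
      rw [show -α + 1 = 1 - α by ring, zero_add] at h
      rw [show (0:ℝ) - α = -α by ring]
      exact h
    have step4 : (∫ u in (0:ℝ)..1, (α - g u) ^ 2) = α ^ 2 - 2 * α * A + B := by
      have hsplit : ∀ u : ℝ, (α - g u) ^ 2 = α ^ 2 - 2 * α * g u + g u ^ 2 := by
        intro u; ring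
      simp_rw [hsplit]
      rw [intervalIntegral.integral_add (((intervalIntegrable_const).sub
        ((hg_int.const_mul (2 * α))))) hg2_int,
        intervalIntegral.integral_sub intervalIntegrable_const (hg_int.const_mul (2 * α)),
        intervalIntegral.integral_const_mul, intervalIntegral.integral_const]
      simp [hA, hB]
      try ring
    rw [step1, step2, step3, step4]
  -- A = E - 1/2
  have hAval : A = E - 1/2 := by
    have h1 : (∫ u in (0:ℝ)..1, Q u) = E := by
      rw [intervalIntegral.integral_of_le (by norm_num : (0:ℝ) ≤ 1),
        MeasureTheory.integral_Ioc_eq_integral_Ioo,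
        ← MeasureTheory.integral_Ico_eq_integral_Ioo, hE]
      exact CQaux.integral_quantile hν
    have h2 : (∫ u in (0:ℝ)..1, (u:ℝ)) = 1/2 := by
      rw [integral_id]; norm_num
    have hQ_int : IntervalIntegrable Q volume 0 1 := by
      have : Q = fun t => g t + t := by funext t; simp [hgdef]
      rw [this]
      exact hg_int.add (intervalIntegral.intervalIntegrable_id)
    rw [hA]
    have : (∫ u in (0:ℝ)..1, g u) = (∫ u in (0:ℝ)..1, Q u) - ∫ u in (0:ℝ)..1, (u:ℝ) := by
      rw [← intervalIntegral.integral_sub hQ_int intervalIntegral.intervalIntegrable_id]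
      try rfl
    rw [this, h1, h2]
  constructor
  · intro α
    rw [hFα, hFα, hAval]
    nlinarith [sq_nonneg (α - (E - 1/2))]
  · intro α hmin
    have h1 := hmin (E - 1/2)
    rw [hFα, hFα, hAval] at h1
    nlinarith [sq_nonneg (α - (E - 1/2))]
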